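/- Let Θ be a finite set with |Θ| = M ≥ 1, let P be a probability measure on Z satisfying Bernstein's condition with constant c > 0, let π be the uniform distribution on Θ, and set α = 1/(c + C). Then E_S E_{θ∼ρ_S(π,α)}[R_P(θ)] − R_P* ≤ 2 log M/(αn), where E_S denotes expectation over the i.i.d. n-sample S from P. -/

import Mathlib

open MeasureTheory ProbabilityTheory
open scoped Classical

noncomputable section

/-- Kullback–Leibler divergence of `ρ` with respect to `π`. -/
def klDiv {Ω : Type*} [MeasurableSpace Ω] (ρ π : Measure Ω) : ENNReal :=
  if ρ ≪ π ∧ Integrable (llr ρ π) ρ then ENNReal.ofReal (∫ x, llr ρ π x ∂ρ) else ⊤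

/-- The prediction risk `R_P(θ) = E_{Z∼P}[ℓ(Z,θ)]`. -/
def risk {Z Θ : Type*} [MeasurableSpace Z] (ℓ : Z → Θ → ℝ) (P : Measure Z) (θ : Θ) : ℝ :=
  ∫ z, ℓ z θ ∂P

/-- The optimal risk `R_P* = inf_θ R_P(θ)`. -/
def optRisk {Z Θ : Type*} [MeasurableSpace Z] (ℓ : Z → Θ → ℝ) (P : Measure Z) : ℝ :=
  ⨅ θ, risk ℓ P θ

/-- The empirical risk `R̂_S(θ) = (1/n) ∑ᵢ ℓ(Zᵢ,θ)`. -/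
def empRisk {Z Θ : Type*} {n : ℕ} (ℓ : Z → Θ → ℝ) (S : Fin n → Z) (θ : Θ) : ℝ :=
  (∑ i, ℓ (S i) θ) / n

/-- The PAC-Bayes risk estimate `R̂_S(ρ,π,α) = E_{θ∼ρ}[R̂_S(θ)] + KL(ρ∥π)/(αn)`. -/
def riskEstimate {Z Θ : Type*} [MeasurableSpace Θ] {n : ℕ} (ℓ : Z → Θ → ℝ) (S : Fin n → Z)
    (ρ π : Measure Θ) (α : ℝ) : ℝ :=
  (∫ θ, empRisk ℓ S θ ∂ρ) + (klDiv ρ π).toReal / (α * n)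


/-- The Gibbs posterior `ρ_S(π,α)`, with density proportional to
`exp(−αn R̂_S)` with respect to the prior `π`. -/
def gibbs {Z Θ : Type*} [MeasurableSpace Θ] {n : ℕ} (ℓ : Z → Θ → ℝ) (π : Measure Θ)
    (α : ℝ) (S : Fin n → Z) : Measure Θ :=
  π.withDensity fun θ => ENNReal.ofReal
    (Real.exp (-(α * n) * empRisk ℓ S θ) / ∫ ϑ, Real.exp (-(α * n) * empRisk ℓ S ϑ) ∂π)

lemma exp_quad_nonpos {y : ℝ} (hy : y ≤ 0) : Real.exp y ≤ 1 + y + y ^ 2 / 2 := by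
  have key : Monotone fun t : ℝ => Real.exp t - 1 - t - t ^ 2 / 2 := by
    apply monotone_of_deriv_nonneg
    · fun_prop
    · intro x
      have hd : HasDerivAt (fun t : ℝ => Real.exp t - 1 - t - t ^ 2 / 2)
          (Real.exp x - 0 - 1 - 2 * x ^ 1 / 2) x :=
        (((Real.hasDerivAt_exp x).sub (hasDerivAt_const x 1)).sub (hasDerivAt_id x)).sub
          ((hasDerivAt_pow 2 x).div_const 2)
      rw [hd.deriv]
      have := Real.add_one_le_exp x
      nlinarith
  have h0 := key hy
  simp only [Real.exp_zero] at h0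
  nlinarith [h0]

lemma one_sub_mul_exp_le {t : ℝ} (ht : 0 ≤ t) : 1 - (1 + t) * Real.exp (-t) ≤ t ^ 2 / 2 := by
  have key : Monotone fun t : ℝ => t ^ 2 / 2 - 1 + (1 + t) * Real.exp (-t) := by
    apply monotone_of_deriv_nonneg
    · fun_prop
    · intro x
      have he : HasDerivAt (fun t : ℝ => Real.exp (-t)) (-Real.exp (-x)) x := by
        simpa [Function.comp_def] using (Real.hasDerivAt_exp (-x)).comp x (hasDerivAt_neg x)
      have hd : HasDerivAt (fun t : ℝ => t ^ 2 / 2 - 1 + (1 + t) * Real.exp (-t))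
          (2 * x ^ 1 / 2 - 0 + (1 * Real.exp (-x) + (1 + x) * (-Real.exp (-x)))) x :=
        (((hasDerivAt_pow 2 x).div_const 2).sub (hasDerivAt_const x 1)).add
          (((hasDerivAt_id x).const_add 1).mul he)
      rw [hd.deriv]
      rcases le_total x 0 with h | h
      · have : 1 ≤ Real.exp (-x) := by
          rw [← Real.exp_zero]; exact Real.exp_le_exp.2 (by linarith)
        nlinarith
      · have : Real.exp (-x) ≤ 1 := by
          rw [← Real.exp_zero]; exact Real.exp_le_exp.2 (by linarith)
        nlinarith
  have h0 := key ht
  simp only [neg_zero, Real.exp_zero] at h0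
  nlinarith [h0]

lemma exp_quad {b y : ℝ} (hb : 0 ≤ b) (hyb : y ≤ b) :
    Real.exp y ≤ 1 + y + y ^ 2 / 2 * Real.exp b := by
  rcases le_total y 0 with hy | hy
  · have h1 := exp_quad_nonpos hy
    have h2 : (1 : ℝ) ≤ Real.exp b := by
      rw [← Real.exp_zero]; exact Real.exp_le_exp.2 hb
    nlinarith [sq_nonneg y]
  · have h1 := one_sub_mul_exp_le hy
    have h2 : Real.exp y ≤ Real.exp b := Real.exp_le_exp.2 hyb
    have h3 : Real.exp y * Real.exp (-y) = 1 := by rw [← Real.exp_add]; simp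
    have hpos : 0 < Real.exp y := Real.exp_pos y
    have h4 : Real.exp y - 1 - y ≤ y ^ 2 / 2 * Real.exp y := by
      calc Real.exp y - 1 - y
          = Real.exp y * (1 - (1 + y) * Real.exp (-y)) := by
            have h5 : Real.exp y * ((1 + y) * Real.exp (-y)) = 1 + y := by
              rw [mul_comm (1 + y), ← mul_assoc, h3, one_mul]
            nlinarith [h3, h5]
        _ ≤ Real.exp y * (y ^ 2 / 2) := mul_le_mul_of_nonneg_left h1 hpos.le
        _ = y ^ 2 / 2 * Real.exp y := by ring
    nlinarith [sq_nonneg y]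

lemma integral_pi_pow' {Z : Type*} [MeasurableSpace Z] (P : Measure Z) [SigmaFinite P]
    (n : ℕ) (f : Z → ℝ) :
    ∫ S : Fin n → Z, ∏ i, f (S i) ∂(Measure.pi fun _ : Fin n => P) = (∫ z, f z ∂P) ^ n := by
  letI : MeasureSpace Z := ⟨P⟩
  have h : (Measure.pi fun _ : Fin n => P) = (volume : Measure (Fin n → Z)) := by
    rw [volume_pi]; rfl
  rw [h]
  rw [← h]
  simpa using (MeasureTheory.integral_fintype_prod_eq_pow f :
    ∫ x : Fin n → Z, ∏ i, f (x i) ∂(Measure.pi fun _ => P) = (∫ x, f x ∂P) ^ Fintype.card (Fin n))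

set_option maxHeartbeats 1000000 in
/-- Learning in isolation on a finite parameter set: with the uniform prior and
`α = 1/(c+C)`, under Bernstein's condition the Gibbs posterior has excess risk at
most `2 log M/(αn)`. -/
theorem gibbs_finite_excess_risk
    {Z Θ : Type*} [MeasurableSpace Z] [MeasurableSpace Θ] [MeasurableSingletonClass Θ]
    [Fintype Θ] [Nonempty Θ]
    (M : ℕ) (hM : Fintype.card Θ = M) (hM1 : 1 ≤ M)
    (ℓ : Z → Θ → ℝ) (hℓmeas : Measurable (Function.uncurry ℓ))
    (C : ℝ) (hC : 0 < C) (hℓ : ∀ z θ, ℓ z θ ∈ Set.Icc 0 C)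
    (P : Measure Z) [IsProbabilityMeasure P]
    (θstar : Θ) (hθstar : ∀ θ, risk ℓ P θstar ≤ risk ℓ P θ)
    (c : ℝ) (hc : 0 < c)
    (hBern : ∀ θ, ∫ z, (ℓ z θ - ℓ z θstar) ^ 2 ∂P ≤ c * (risk ℓ P θ - optRisk ℓ P))
    (π : Measure Θ) (hπ : π = (PMF.uniformOfFintype Θ).toMeasure)
    (n : ℕ) (hn : 0 < n) (α : ℝ) (hα : α = 1 / (c + C)) :
    (∫ S, ∫ θ, risk ℓ P θ ∂(gibbs ℓ π α S) ∂(Measure.pi fun _ : Fin n => P)) -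
        optRisk ℓ P ≤
      2 * Real.log M / (α * n) := by
  subst hπ
  -- basic numeric facts
  have hcC : (0:ℝ) < c + C := by linarith
  have hα0 : 0 < α := by rw [hα]; positivity
  have hαcC : α * (c + C) = 1 := by rw [hα]; field_simp
  have hαC1 : α * C ≤ 1 := by nlinarith
  have hαC0 : 0 ≤ α * C := by positivity
  have hkey : α * c * Real.exp (α * C) ≤ 1 := by
    have h2 : 1 - α * C ≤ Real.exp (-(α * C)) := by
      have := Real.add_one_le_exp (-(α * C)); linarith
    have h3 := mul_le_mul_of_nonneg_right h2 (Real.exp_pos (α * C)).le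
    rw [← Real.exp_add, neg_add_cancel, Real.exp_zero] at h3
    have h4 : α * c = 1 - α * C := by linear_combination hαcC
    rw [h4]; exact h3
  have hn0 : (0:ℝ) < n := by exact_mod_cast hn
  have hαn : (0:ℝ) < α * n := by positivity
  have hM0 : (0:ℝ) < M := by exact_mod_cast hM1
  -- measurability and integrability of the loss
  have hmθ : ∀ θ, Measurable fun z => ℓ z θ := fun θ =>
    hℓmeas.comp (measurable_id.prodMk measurable_const)
  have intℓ : ∀ θ, Integrable (fun z => ℓ z θ) P := by
    intro θ
    refine (integrable_const C).mono' (hmθ θ).aestronglyMeasurable (ae_of_all _ fun z => ?_)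
    rw [Real.norm_eq_abs, abs_of_nonneg (hℓ z θ).1]; exact (hℓ z θ).2
  have hrisk0 : ∀ θ, 0 ≤ risk ℓ P θ := fun θ =>
    integral_nonneg fun z => (hℓ z θ).1
  have hriskC : ∀ θ, risk ℓ P θ ≤ C := by
    intro θ
    calc risk ℓ P θ ≤ ∫ _, C ∂P := integral_mono (intℓ θ) (integrable_const C)
          fun z => (hℓ z θ).2
      _ = C := by simp
  have hopt : optRisk ℓ P = risk ℓ P θstar := by
    refine le_antisymm ?_ (le_ciInf hθstar)
    exact ciInf_le (Set.Finite.bddBelow (Set.finite_range _)) θstar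
  set Δ : Θ → ℝ := fun θ => risk ℓ P θ - risk ℓ P θstar with hΔdef
  have hΔ0 : ∀ θ, 0 ≤ Δ θ := fun θ => by simp [hΔdef]; exact hθstar θ
  have hΔC : ∀ θ, Δ θ ≤ C := fun θ => by
    have := hrisk0 θstar; have := hriskC θ; simp [hΔdef]; linarith
  -- the single-sample moment bound
  set f : Θ → Z → ℝ := fun θ z => Real.exp (α * (ℓ z θstar - ℓ z θ)) with hfdef
  have hf_pos : ∀ θ z, 0 < f θ z := fun θ z => Real.exp_pos _
  have hf_meas : ∀ θ, Measurable (f θ) := fun θ =>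
    (((hmθ θstar).sub (hmθ θ)).const_mul α).exp
  have hf_bound : ∀ θ z, f θ z ≤ Real.exp (α * C) := by
    intro θ z
    apply Real.exp_le_exp.2
    have h1 := (hℓ z θstar).2
    have h2 := (hℓ z θ).1
    nlinarith
  have intf : ∀ θ, Integrable (f θ) P := by
    intro θ
    refine (integrable_const (Real.exp (α * C))).mono' (hf_meas θ).aestronglyMeasurable
      (ae_of_all _ fun z => ?_)
    rw [Real.norm_eq_abs, abs_of_nonneg (hf_pos θ z).le]; exact hf_bound θ z
  have intg2 : ∀ θ, Integrable (fun z => (ℓ z θstar - ℓ z θ) ^ 2) P := by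
    intro θ
    refine (integrable_const (C ^ 2)).mono'
      (((hmθ θstar).sub (hmθ θ)).pow_const 2).aestronglyMeasurable (ae_of_all _ fun z => ?_)
    rw [Real.norm_eq_abs, abs_of_nonneg (sq_nonneg _)]
    have h1 := (hℓ z θstar).1; have h2 := (hℓ z θstar).2
    have h3 := (hℓ z θ).1; have h4 := (hℓ z θ).2
    nlinarith
  have hsq : ∀ θ, ∫ z, (ℓ z θstar - ℓ z θ) ^ 2 ∂P ≤ c * Δ θ := by
    intro θ
    have h1 : (fun z => (ℓ z θstar - ℓ z θ) ^ 2) = fun z => (ℓ z θ - ℓ z θstar) ^ 2 := by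
      funext z; ring
    rw [h1]
    have := hBern θ
    rw [hopt] at this
    exact this
  have hEf : ∀ θ, ∫ z, f θ z ∂P ≤ 1 - α / 2 * Δ θ := by
    intro θ
    set q : Z → ℝ := fun z =>
      1 + (α * (ℓ z θstar - ℓ z θ) + α ^ 2 * Real.exp (α * C) / 2 * (ℓ z θstar - ℓ z θ) ^ 2)
      with hqdef
    have hB1 : Integrable (fun z => α * (ℓ z θstar - ℓ z θ)) P := by
      exact ((intℓ θstar).sub (intℓ θ)).const_mul α
    have hB2 : Integrable (fun z => α ^ 2 * Real.exp (α * C) / 2 * (ℓ z θstar - ℓ z θ) ^ 2) P := by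
      exact (intg2 θ).const_mul _
    have hB12 : Integrable (fun z => α * (ℓ z θstar - ℓ z θ) +
        α ^ 2 * Real.exp (α * C) / 2 * (ℓ z θstar - ℓ z θ) ^ 2) P := by
      exact hB1.add hB2
    have intq : Integrable q P := by
      rw [hqdef]; exact (integrable_const 1).add hB12
    have hpt : ∀ z, f θ z ≤ q z := by
      intro z
      have hyb : α * (ℓ z θstar - ℓ z θ) ≤ α * C := by
        have h1 := (hℓ z θstar).2; have h2 := (hℓ z θ).1
        nlinarith
      have := exp_quad hαC0 hyb
      simp only [hqdef, hfdef]
      nlinarith [this]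
    have hIle : ∫ z, f θ z ∂P ≤ ∫ z, q z ∂P := integral_mono (intf θ) intq hpt
    have hqint : ∫ z, q z ∂P = 1 + (α * (risk ℓ P θstar - risk ℓ P θ) +
        α ^ 2 * Real.exp (α * C) / 2 * ∫ z, (ℓ z θstar - ℓ z θ) ^ 2 ∂P) := by
      simp only [hqdef]
      rw [integral_add (integrable_const 1) hB12, integral_add hB1 hB2, integral_const_mul,
        integral_const_mul, integral_sub (intℓ θstar) (intℓ θ), integral_const]
      simp [risk]
    rw [hqint] at hIle
    have hsqθ := hsq θ
    have hE1 : (1:ℝ) ≤ Real.exp (α * C) := by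
      rw [← Real.exp_zero]; exact Real.exp_le_exp.2 hαC0
    have hΔθ := hΔ0 θ
    have hEexp : 0 < Real.exp (α * C) := Real.exp_pos _
    -- 1 + α(R* - Rθ) + (α²E/2)·m₂ ≤ 1 - αΔ + (α²E/2) c Δ ≤ 1 - (α/2)Δ
    have hstar : α * (risk ℓ P θstar - risk ℓ P θ) = -(α * Δ θ) := by
      simp [hΔdef]; ring
    have hm2 : α ^ 2 * Real.exp (α * C) / 2 * ∫ z, (ℓ z θstar - ℓ z θ) ^ 2 ∂P ≤
        α ^ 2 * Real.exp (α * C) / 2 * (c * Δ θ) := by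
      apply mul_le_mul_of_nonneg_left hsqθ
      positivity
    have hfin : α ^ 2 * Real.exp (α * C) / 2 * (c * Δ θ) ≤ α / 2 * Δ θ := by
      have := mul_le_mul_of_nonneg_right hkey (mul_nonneg (by positivity : (0:ℝ) ≤ α / 2) hΔθ)
      nlinarith
    linarith
  -- sample-level quantities
  set μn := (Measure.pi fun _ : Fin n => P) with hμn
  haveI : IsProbabilityMeasure μn := by rw [hμn]; infer_instance
  have hemp_mem : ∀ (S : Fin n → Z) θ, empRisk ℓ S θ ∈ Set.Icc 0 C := by
    intro S θ
    constructor
    · exact div_nonneg (Finset.sum_nonneg fun i _ => (hℓ _ θ).1) hn0.le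
    · show (∑ i, ℓ (S i) θ) / (n : ℝ) ≤ C
      rw [div_le_iff₀ hn0]
      calc (∑ i, ℓ (S i) θ) ≤ ∑ _i : Fin n, C := Finset.sum_le_sum fun i _ => (hℓ _ _).2
        _ = C * n := by simp [Finset.sum_const, mul_comm]
  have hemp_meas : ∀ θ, Measurable fun S : Fin n → Z => empRisk ℓ S θ := by
    intro θ
    show Measurable fun S : Fin n → Z => (∑ i, ℓ (S i) θ) / (n : ℝ)
    exact (Finset.measurable_sum Finset.univ
      fun i _ => (hmθ θ).comp (measurable_pi_apply i)).div_const _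
  set v : (Fin n → Z) → Θ → ℝ :=
    fun S θ => Real.exp (α * n * (empRisk ℓ S θstar - empRisk ℓ S θ)) with hvdef
  have hv_pos : ∀ S θ, 0 < v S θ := fun S θ => Real.exp_pos _
  have hv_meas : ∀ θ, Measurable fun S => v S θ := fun θ =>
    (((hemp_meas θstar).sub (hemp_meas θ)).const_mul (α * n)).exp
  have hv_bound : ∀ S θ, v S θ ≤ Real.exp (α * n * C) := by
    intro S θ
    apply Real.exp_le_exp.2
    have h1 := (hemp_mem S θstar).2
    have h2 := (hemp_mem S θ).1
    nlinarith
  have hvstar : ∀ S, v S θstar = 1 := by intro S; simp [hvdef]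
  set V : (Fin n → Z) → ℝ := fun S => ∑ θ, v S θ with hVdef
  have hV1 : ∀ S, 1 ≤ V S := by
    intro S
    rw [← hvstar S]
    exact Finset.single_le_sum (fun θ _ => (hv_pos S θ).le) (Finset.mem_univ θstar)
  have hV_pos : ∀ S, 0 < V S := fun S => lt_of_lt_of_le one_pos (hV1 S)
  set w : (Fin n → Z) → Θ → ℝ := fun S θ => v S θ / V S with hwdef
  have hw_nonneg : ∀ S θ, 0 ≤ w S θ := fun S θ => div_nonneg (hv_pos S θ).le (hV_pos S).le
  have hw_le_one : ∀ S θ, w S θ ≤ 1 := by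
    intro S θ
    rw [div_le_one (hV_pos S)]
    exact Finset.single_le_sum (fun ϑ _ => (hv_pos S ϑ).le) (Finset.mem_univ θ)
  have hwsum : ∀ S, ∑ θ, w S θ = 1 := by
    intro S
    simp only [hwdef]
    rw [← Finset.sum_div]
    exact div_self (hV_pos S).ne'
  set b : Θ → ℝ := fun θ => α * n / 2 * Δ θ with hbdef
  have hb0 : ∀ θ, 0 ≤ b θ := fun θ => mul_nonneg (by positivity) (hΔ0 θ)
  have hvprod : ∀ θ S, v S θ = ∏ i, f θ (S i) := by
    intro θ S
    simp only [hvdef, hfdef]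
    rw [← Real.exp_sum]
    congr 1
    simp only [empRisk]
    rw [← Finset.mul_sum, Finset.sum_sub_distrib, div_sub_div_same, mul_assoc,
      mul_div_assoc', mul_comm (n : ℝ), mul_div_assoc, div_self hn0.ne', mul_one]
  have hintv : ∀ θ, Integrable (fun S => v S θ) μn := by
    intro θ
    refine (integrable_const (Real.exp (α * n * C))).mono' (hv_meas θ).aestronglyMeasurable
      (ae_of_all _ fun S => ?_)
    rw [Real.norm_eq_abs, abs_of_nonneg (hv_pos S θ).le]
    exact hv_bound S θ
  have hv_int_le : ∀ θ, ∫ S, v S θ ∂μn ≤ Real.exp (-(b θ)) := by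
    intro θ
    have h1 : ∫ S, v S θ ∂μn = (∫ z, f θ z ∂P) ^ n := by
      simp only [hvprod]
      rw [hμn]
      exact integral_pi_pow' P n (f θ)
    have hbase : 0 ≤ ∫ z, f θ z ∂P := integral_nonneg fun z => (hf_pos θ z).le
    have h0' : 0 ≤ 1 - α / 2 * Δ θ := le_trans hbase (hEf θ)
    have h2 : (∫ z, f θ z ∂P) ^ n ≤ (1 - α / 2 * Δ θ) ^ n :=
      pow_le_pow_left₀ hbase (hEf θ) n
    have h3 : 1 - α / 2 * Δ θ ≤ Real.exp (-(α / 2 * Δ θ)) := by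
      have := Real.add_one_le_exp (-(α / 2 * Δ θ)); linarith
    have h4 : (1 - α / 2 * Δ θ) ^ n ≤ Real.exp (-(α / 2 * Δ θ)) ^ n :=
      pow_le_pow_left₀ h0' h3 n
    have h5 : Real.exp (-(α / 2 * Δ θ)) ^ n = Real.exp (-(b θ)) := by
      rw [← Real.exp_nat_mul]
      congr 1
      simp only [hbdef]
      ring
    rw [h1]
    calc (∫ z, f θ z ∂P) ^ n ≤ (1 - α / 2 * Δ θ) ^ n := h2
      _ ≤ Real.exp (-(α / 2 * Δ θ)) ^ n := h4
      _ = Real.exp (-(b θ)) := h5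
  -- per-sample deterministic inequality
  set Y : (Fin n → Z) → ℝ := fun S => ∑ θ, v S θ * Real.exp (b θ) with hYdef
  have hY_pos : ∀ S, 0 < Y S :=
    fun S => Finset.sum_pos (fun θ _ => mul_pos (hv_pos S θ) (Real.exp_pos _))
      Finset.univ_nonempty
  have hkeyS : ∀ S, ∑ θ, w S θ * Δ θ ≤ 2 / (α * n) * (Y S / M + (Real.log M - 1)) := by
    intro S
    have hJ : Real.exp (∑ θ, w S θ * b θ) ≤ ∑ θ, w S θ * Real.exp (b θ) := by
      have := convexOn_exp.map_sum_le (t := Finset.univ) (w := w S) (p := b)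
        (fun θ _ => hw_nonneg S θ) (hwsum S) (fun θ _ => Set.mem_univ _)
      simpa using this
    have hsum_eq : ∑ θ, w S θ * Real.exp (b θ) = Y S / V S := by
      simp only [hwdef, hYdef]
      rw [eq_div_iff (hV_pos S).ne', Finset.sum_mul]
      exact Finset.sum_congr rfl fun θ _ => by field_simp; exact mul_div_cancel_right₀ _ (hV_pos S).ne'
    have hYV_pos : 0 < Y S / V S := div_pos (hY_pos S) (hV_pos S)
    have h1 : ∑ θ, w S θ * b θ ≤ Real.log (Y S / V S) := by
      rw [← Real.log_exp (∑ θ, w S θ * b θ)]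
      apply Real.log_le_log (Real.exp_pos _)
      rw [← hsum_eq]; exact hJ
    have h3 : Y S / V S ≤ Y S := div_le_self (hY_pos S).le (hV1 S)
    have h4 : Real.log (Y S / V S) ≤ Real.log (Y S) := Real.log_le_log hYV_pos h3
    have h5 : Real.log (Y S) = Real.log M + Real.log (Y S / M) := by
      have hYM : Y S = M * (Y S / M) := by field_simp
      rw [hYM, Real.log_mul hM0.ne' (div_pos (hY_pos S) hM0).ne', ← hYM]
    have h6 : Real.log (Y S / M) ≤ Y S / M - 1 :=
      Real.log_le_sub_one_of_pos (div_pos (hY_pos S) hM0)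
    have h7 : ∑ θ, w S θ * b θ ≤ Y S / M + (Real.log M - 1) := by linarith
    have h8 : ∑ θ, w S θ * Δ θ = 2 / (α * n) * ∑ θ, w S θ * b θ := by
      rw [Finset.mul_sum]
      apply Finset.sum_congr rfl
      intro θ _
      simp only [hbdef]
      field_simp
    rw [h8]
    exact mul_le_mul_of_nonneg_left h7 (by positivity)
  -- integrability on the sample space
  have hV_meas : Measurable V := Finset.measurable_sum _ fun θ _ => hv_meas θ
  have hintw : ∀ θ, Integrable (fun S => w S θ) μn := by
    intro θ
    refine (integrable_const (1 : ℝ)).mono' ((hv_meas θ).div hV_meas).aestronglyMeasurable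
      (ae_of_all _ fun S => ?_)
    rw [Real.norm_eq_abs, abs_of_nonneg (hw_nonneg S θ)]
    exact hw_le_one S θ
  have hintLHS : Integrable (fun S => ∑ θ, w S θ * Δ θ) μn :=
    integrable_finset_sum _ fun θ _ => (hintw θ).mul_const (Δ θ)
  have hintY : Integrable Y μn :=
    integrable_finset_sum _ fun θ _ => (hintv θ).mul_const _
  have hYint_le : ∫ S, Y S ∂μn ≤ M := by
    have h1 : ∫ S, Y S ∂μn = ∑ θ, (∫ S, v S θ ∂μn) * Real.exp (b θ) := by
      simp only [hYdef]
      rw [integral_finset_sum _ fun θ _ => (hintv θ).mul_const _]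
      exact Finset.sum_congr rfl fun θ _ => integral_mul_const _ _
    rw [h1]
    calc ∑ θ, (∫ S, v S θ ∂μn) * Real.exp (b θ)
        ≤ ∑ _θ : Θ, (1 : ℝ) := by
          apply Finset.sum_le_sum
          intro θ _
          have := mul_le_mul_of_nonneg_right (hv_int_le θ) (Real.exp_pos (b θ)).le
          rwa [← Real.exp_add, neg_add_cancel, Real.exp_zero] at this
      _ = M := by rw [Finset.sum_const, Finset.card_univ, hM, nsmul_eq_mul, mul_one]
  have hintRHS : Integrable (fun S => 2 / (α * n) * (Y S / M + (Real.log M - 1))) μn := by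
    exact ((hintY.div_const (M : ℝ)).add (integrable_const _)).const_mul _
  have hmain : ∫ S, (∑ θ, w S θ * Δ θ) ∂μn ≤ 2 * Real.log M / (α * n) := by
    have h1 := integral_mono hintLHS hintRHS hkeyS
    have h2 : ∫ S, 2 / (α * n) * (Y S / M + (Real.log M - 1)) ∂μn =
        2 / (α * n) * ((∫ S, Y S ∂μn) / M + (Real.log M - 1)) := by
      rw [integral_const_mul, integral_add (hintY.div_const (M : ℝ)) (integrable_const _),
        integral_div, integral_const]
      simp [measure_univ]
    rw [h2] at h1
    have h3 : (∫ S, Y S ∂μn) / M ≤ 1 := by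
      rw [div_le_one hM0]; exact hYint_le
    calc ∫ S, (∑ θ, w S θ * Δ θ) ∂μn
        ≤ 2 / (α * n) * ((∫ S, Y S ∂μn) / M + (Real.log M - 1)) := h1
      _ ≤ 2 / (α * n) * Real.log M := by
          apply mul_le_mul_of_nonneg_left _ (by positivity)
          linarith
      _ = 2 * Real.log M / (α * n) := by ring
  -- computing the Gibbs integral
  set eR : (Fin n → Z) → Θ → ℝ := fun S θ => Real.exp (-(α * n) * empRisk ℓ S θ) with heRdef
  have heR_pos : ∀ S θ, 0 < eR S θ := fun S θ => Real.exp_pos _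
  set T : (Fin n → Z) → ℝ := fun S => ∑ ϑ, eR S ϑ with hTdef
  have hT_pos : ∀ S, 0 < T S :=
    fun S => Finset.sum_pos (fun θ _ => heR_pos S θ) Finset.univ_nonempty
  have hπR : ∀ θ : Θ, (((PMF.uniformOfFintype Θ).toMeasure) {θ}).toReal = (M : ℝ)⁻¹ := by
    intro θ
    rw [PMF.toMeasure_apply_singleton _ θ (measurableSet_singleton θ),
      PMF.uniformOfFintype_apply, hM]
    simp [ENNReal.toReal_inv]
  have hπne : ∀ θ : Θ, ((PMF.uniformOfFintype Θ).toMeasure) {θ} ≠ ⊤ := by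
    intro θ
    rw [PMF.toMeasure_apply_singleton _ θ (measurableSet_singleton θ),
      PMF.uniformOfFintype_apply, hM]
    simp only [ne_eq, ENNReal.inv_eq_top, Nat.cast_eq_zero]
    omega
  have hIint : ∀ S, ∫ ϑ, eR S ϑ ∂((PMF.uniformOfFintype Θ).toMeasure) = T S / M := by
    intro S
    rw [integral_fintype (Integrable.of_finite)]
    simp only [smul_eq_mul, Measure.real_def, hπR, hTdef]
    rw [Finset.sum_div]
    exact Finset.sum_congr rfl fun θ _ => by rw [inv_mul_eq_div]
  have hweq : ∀ S θ, w S θ = eR S θ / T S := by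
    intro S θ
    have hv' : ∀ ϑ, v S ϑ = eR S ϑ / eR S θstar := by
      intro ϑ
      simp only [hvdef, heRdef]
      rw [← Real.exp_sub]
      congr 1
      ring
    simp only [hwdef, hVdef, hv', hTdef]
    rw [← Finset.sum_div]
    have h1 : eR S θstar ≠ 0 := (heR_pos S θstar).ne'
    have h2 : (∑ i, eR S i) ≠ 0 := (Finset.sum_pos (fun ϑ _ => heR_pos S ϑ)
      Finset.univ_nonempty).ne'
    field_simp
  have hGfin : ∀ S : Fin n → Z, IsFiniteMeasure (gibbs ℓ ((PMF.uniformOfFintype Θ).toMeasure) α S) := by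
    intro S
    constructor
    simp only [gibbs]
    rw [withDensity_apply _ MeasurableSet.univ, Measure.restrict_univ, lintegral_fintype]
    refine ENNReal.sum_lt_top.mpr fun θ _ => ?_
    exact ENNReal.mul_lt_top ENNReal.ofReal_lt_top (lt_top_iff_ne_top.2 (hπne θ))
  have hGs : ∀ (S : Fin n → Z) (θ : Θ),
      ((gibbs ℓ ((PMF.uniformOfFintype Θ).toMeasure) α S) {θ}).toReal = eR S θ / T S := by
    intro S θ
    simp only [gibbs]
    rw [withDensity_apply _ (measurableSet_singleton θ), lintegral_singleton, hIint S]
    rw [ENNReal.toReal_mul, ENNReal.toReal_ofReal (by positivity), hπR θ]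
    simp only [heRdef]
    have h1 : T S ≠ 0 := (hT_pos S).ne'
    simp only [hTdef, heRdef] at h1
    field_simp
  have hG : ∀ S : Fin n → Z, ∫ θ, risk ℓ P θ ∂(gibbs ℓ ((PMF.uniformOfFintype Θ).toMeasure) α S)
      = ∑ θ, w S θ * risk ℓ P θ := by
    intro S
    haveI := hGfin S
    rw [integral_fintype (Integrable.of_finite)]
    exact Finset.sum_congr rfl fun θ _ => by rw [smul_eq_mul, Measure.real_def, hGs S θ, ← hweq S θ]
  -- final assembly
  rw [hopt]
  have hrepl : (∫ S, ∫ θ, risk ℓ P θ ∂(gibbs ℓ ((PMF.uniformOfFintype Θ).toMeasure) α S) ∂μn)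
      = ∫ S, (∑ θ, w S θ * risk ℓ P θ) ∂μn := by
    exact integral_congr_ae (ae_of_all _ hG)
  rw [hrepl]
  have hdecomp : ∀ S : Fin n → Z,
      ∑ θ, w S θ * risk ℓ P θ = (∑ θ, w S θ * Δ θ) + risk ℓ P θstar := by
    intro S
    have h1 : ∑ θ, w S θ * risk ℓ P θ = ∑ θ, (w S θ * Δ θ + w S θ * risk ℓ P θstar) := by
      apply Finset.sum_congr rfl
      intro θ _
      simp only [hΔdef]
      ring
    rw [h1, Finset.sum_add_distrib, ← Finset.sum_mul, hwsum S, one_mul]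
  calc (∫ S, (∑ θ, w S θ * risk ℓ P θ) ∂μn) - risk ℓ P θstar
      = ∫ S, (∑ θ, w S θ * Δ θ) ∂μn := by
        rw [integral_congr_ae (ae_of_all _ hdecomp),
          integral_add hintLHS (integrable_const _), integral_const]
        simp [measure_univ]
    _ ≤ 2 * Real.log M / (α * n) := hmain


end
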